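/- arXiv:2102.11600 — 3 statements merged into one kernel-verified Lean document; each statement's English description precedes it below -/
import Mathlib

section
/- Let L : ℝ^k → ℝ be a loss function, let A : ℝ^k → ℝ^k be an invertible linear map such that L(A x) = L(x) for every x ∈ ℝ^k, and let T_w and T_{Aw} be invertible linear operators on ℝ^k satisfying T_{Aw}⁻¹ ∘ A = T_w⁻¹. Then for every w ∈ ℝ^k, every ρ > 0 and every p with 1 ≤ p ≤ ∞, the adaptive sharpness values at w and at A w coincide: sup over {ε ∈ ℝ^k : ‖T_w⁻¹ ε‖_p ≤ ρ} of L(w + ε), minus L(w), equals sup over {ε ∈ ℝ^k : ‖T_{Aw}⁻¹ ε‖_p ≤ ρ} of L(A w + ε), minus L(A w). -/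
open scoped ENNReal BigOperators

/-- The ℓ^p norm on ℝ^k for `p : ℝ≥0∞` (the sup norm when `p = ∞`). -/
noncomputable def lpNorm {k : ℕ} (p : ℝ≥0∞) (x : Fin k → ℝ) : ℝ :=
  if p = ∞ then ⨆ i, |x i| else (∑ i, |x i| ^ p.toReal) ^ (1 / p.toReal)

/-- **Theorem 1 (scale-invariance of adaptive sharpness).**
If `A` is an invertible linear map leaving the loss `L` unchanged and the invertible
linear operators `T_w`, `T_{Aw}` satisfy `T_{Aw}⁻¹ ∘ A = T_w⁻¹`, then the adaptive
sharpness values at `w` and at `A w` coincide. -/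
theorem adaptive_sharpness_scale_invariant {k : ℕ} (L : (Fin k → ℝ) → ℝ)
    (A Tw TAw : (Fin k → ℝ) ≃ₗ[ℝ] (Fin k → ℝ))
    (hA : ∀ x, L (A x) = L x)
    (hT : ∀ x, TAw.symm (A x) = Tw.symm x)
    (w : Fin k → ℝ) (ρ : ℝ) (hρ : 0 < ρ) (p : ℝ≥0∞) (hp : 1 ≤ p) :
    sSup ((fun ε => L (w + ε)) '' {ε | lpNorm p (Tw.symm ε) ≤ ρ}) - L w =
      sSup ((fun ε => L (A w + ε)) '' {ε | lpNorm p (TAw.symm ε) ≤ ρ}) - L (A w) := by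
  rw [hA w]
  congr 2
  ext y
  constructor
  · rintro ⟨ε, hε, rfl⟩
    exact ⟨A ε, by simpa [Set.mem_setOf_eq, hT] using hε,
      by simp only [← map_add, hA]⟩
  · rintro ⟨ε, hε, rfl⟩
    refine ⟨A.symm ε, ?_, ?_⟩
    · have h := hT (A.symm ε)
      rw [LinearEquiv.apply_symm_apply] at h
      simpa [Set.mem_setOf_eq, ← h] using hε
    · have : A w + ε = A (w + A.symm ε) := by
        rw [map_add, LinearEquiv.apply_symm_apply]
      simp only []
      rw [this, hA]
end

section
/- Let L : ℝ^k → ℝ, let w ∈ ℝ^k have all coordinates nonzero, and let A = diag(a₁, …, a_k) with every aᵢ > 0 satisfy L(A x) = L(x) for all x ∈ ℝ^k. Then for every ρ > 0 and 1 ≤ p ≤ ∞, sup over {ε : ‖diag(|w₁|, …, |w_k|)⁻¹ ε‖_p ≤ ρ} of L(w + ε), minus L(w), equals sup over {ε : ‖diag(|a₁w₁|, …, |a_kw_k|)⁻¹ ε‖_p ≤ ρ} of L(A w + ε), minus L(A w). -/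
open scoped ENNReal BigOperators

/-- Element-wise instance of Theorem 1: if the positive diagonal scaling
`A = diag(a₁, …, a_k)` leaves the loss unchanged, then adaptive sharpness with the
element-wise normalization operator `T_w = diag(|w₁|, …, |w_k|)` is the same at
`w` and at `A w`. -/
theorem elementwise_adaptive_sharpness_invariant {k : ℕ} (L : (Fin k → ℝ) → ℝ)
    (w : Fin k → ℝ) (hw : ∀ i, w i ≠ 0)
    (a : Fin k → ℝ) (ha : ∀ i, 0 < a i)
    (hA : ∀ x : Fin k → ℝ, L (fun i => a i * x i) = L x)
    (ρ : ℝ) (hρ : 0 < ρ) (p : ℝ≥0∞) (hp : 1 ≤ p) :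
    sSup ((fun ε => L (w + ε)) '' {ε | lpNorm p (fun i => ε i / |w i|) ≤ ρ}) - L w =
      sSup ((fun ε => L ((fun i => a i * w i) + ε)) ''
          {ε | lpNorm p (fun i => ε i / |a i * w i|) ≤ ρ}) -
        L (fun i => a i * w i) := by
  have hLw : L (fun i => a i * w i) = L w := hA w
  have hset : ((fun ε => L (w + ε)) '' {ε | lpNorm p (fun i => ε i / |w i|) ≤ ρ}) =
      ((fun ε => L ((fun i => a i * w i) + ε)) ''
        {ε | lpNorm p (fun i => ε i / |a i * w i|) ≤ ρ}) := by
    ext y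
    constructor
    · rintro ⟨ε, hε, rfl⟩
      refine ⟨fun i => a i * ε i, ?_, ?_⟩
      · have : (fun i => (a i * ε i) / |a i * w i|) = fun i => ε i / |w i| := by
          funext i
          rw [abs_mul, abs_of_pos (ha i)]
          rw [mul_div_mul_left _ _ (ha i).ne']
        simpa only [Set.mem_setOf_eq, this] using hε
      · have h1 : ((fun i => a i * w i) + fun i => a i * ε i) =
            fun i => a i * (w i + ε i) := by funext i; simp [Pi.add_apply]; ring
        simp only [h1]
        have := hA (w + ε)
        simpa using this
    · rintro ⟨ε, hε, rfl⟩
      refine ⟨fun i => ε i / a i, ?_, ?_⟩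
      · have : (fun i => (ε i / a i) / |w i|) = fun i => ε i / |a i * w i| := by
          funext i
          rw [abs_mul, abs_of_pos (ha i)]
          field_simp
        simpa [Set.mem_setOf_eq, this] using hε
      · have h1 : ((fun i => a i * w i) + ε) =
            fun i => a i * (w i + ε i / a i) := by
          funext i
          have := (ha i).ne'
          field_simp
          rfl
        have := hA (w + fun i => ε i / a i)
        simp only [h1]
        simpa using this.symm
  rw [hset, hLw]
end

section
/- Let L : ℝ^k → ℝ be measurable with 0 ≤ L(x) ≤ 1 for all x, let w ∈ ℝ^k, let σ > 0, and let ε = (ε₁, …, ε_k) have independent coordinates εᵢ ~ N(0, σ²). Let η > 0, let T be an invertible linear operator on ℝ^k with ‖T⁻¹ x‖₂ ≤ ‖x‖₂/η for all x, let n ≥ 1, and set ρ = √k · σ · (1 + √(log n / k)) / η. Then E[L(w + ε)] ≤ (1 − 1/√n) · sup over {ε' : ‖T⁻¹ ε'‖₂ ≤ ρ} of L(w + ε'), plus 1/√n; in particular E[L(w + ε)] ≤ sup over {ε' : ‖T⁻¹ ε'‖₂ ≤ ρ} of L(w + ε') plus 1/√n. -/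
set_option maxHeartbeats 1000000

open MeasureTheory ProbabilityTheory Real
open scoped NNReal ENNReal BigOperators

section Aux

lemma pi_integral_pow {α : Type*} [MeasurableSpace α] {k : ℕ} (μ : Measure α) [SigmaFinite μ]
    (f : α → ℝ) :
    ∫ x : Fin k → α, ∏ i, f (x i) ∂(Measure.pi fun _ => μ) = (∫ x, f x ∂μ) ^ k := by
  letI : MeasureSpace α := ⟨μ⟩
  have h : (Measure.pi fun _ : Fin k => μ) = (volume : Measure (Fin k → α)) :=
    (volume_pi).symm
  rw [h]
  simpa [← h] using integral_fintype_prod_eq_pow (ι := Fin k) (μ := μ) f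

lemma pi_integrable_prod {α : Type*} [MeasurableSpace α] {k : ℕ} (μ : Measure α) [SigmaFinite μ]
    {f : α → ℝ} (hf : Integrable f μ) :
    Integrable (fun x : Fin k → α => ∏ i, f (x i)) (Measure.pi fun _ => μ) := by
  letI : MeasureSpace α := ⟨μ⟩
  have h : (Measure.pi fun _ : Fin k => μ) = (volume : Measure (Fin k → α)) :=
    (volume_pi).symm
  rw [h]
  exact Integrable.fintype_prod (fun _ => hf)

lemma gauss_density_integrand (v : ℝ≥0) (hv : v ≠ 0) (c : ℝ) :
    ∀ x : ℝ, gaussianPDFReal 0 v x * Real.exp (c * x ^ 2)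
      = (Real.sqrt (2 * π * v))⁻¹ * Real.exp (-((1 - 2 * c * v) / (2 * v)) * x ^ 2) := by
  intro x
  have hv' : (0:ℝ) < v := by positivity
  rw [gaussianPDFReal, mul_assoc, ← Real.exp_add]
  congr 1
  field_simp
  ring

lemma gauss_mgf_integrable (v : ℝ≥0) (hv : v ≠ 0) (c : ℝ) (hc : 2 * c * v < 1) :
    Integrable (fun x => Real.exp (c * x ^ 2)) (gaussianReal 0 v) := by
  have hv' : (0:ℝ) < v := by positivity
  have hb : (0:ℝ) < (1 - 2 * c * v) / (2 * v) := by
    apply div_pos (by linarith) (by linarith)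
  rw [gaussianReal_of_var_ne_zero _ hv, gaussianPDF_def]
  have hmeas : Measurable fun x => (gaussianPDFReal 0 v x).toNNReal :=
    (measurable_gaussianPDFReal 0 v).real_toNNReal
  have heq : (fun x => ENNReal.ofReal (gaussianPDFReal 0 v x))
      = fun x => ((gaussianPDFReal 0 v x).toNNReal : ℝ≥0∞) := rfl
  rw [heq, integrable_withDensity_iff_integrable_smul hmeas]
  have : (fun x => ((gaussianPDFReal 0 v x).toNNReal : ℝ) • Real.exp (c * x ^ 2))
      = fun x => (Real.sqrt (2 * π * v))⁻¹ * Real.exp (-((1 - 2 * c * v) / (2 * v)) * x ^ 2) := by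
    funext x
    rw [smul_eq_mul, Real.coe_toNNReal _ (gaussianPDFReal_nonneg 0 v x)]
    exact gauss_density_integrand v hv c x
  rw [show (fun x => ((gaussianPDFReal 0 v x).toNNReal) • Real.exp (c * x ^ 2))
      = fun x => ((gaussianPDFReal 0 v x).toNNReal : ℝ) • Real.exp (c * x ^ 2) from rfl, this]
  exact (integrable_exp_neg_mul_sq hb).const_mul _

lemma gauss_mgf (v : ℝ≥0) (hv : v ≠ 0) (c : ℝ) (hc : 2 * c * v < 1) :
    ∫ x, Real.exp (c * x ^ 2) ∂(gaussianReal 0 v) = 1 / Real.sqrt (1 - 2 * c * v) := by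
  have hv' : (0:ℝ) < v := by positivity
  have hb : (0:ℝ) < (1 - 2 * c * v) / (2 * v) := by
    apply div_pos (by linarith) (by linarith)
  rw [gaussianReal_of_var_ne_zero _ hv, gaussianPDF_def]
  have hmeas : Measurable fun x => (gaussianPDFReal 0 v x).toNNReal :=
    (measurable_gaussianPDFReal 0 v).real_toNNReal
  have heq : (fun x => ENNReal.ofReal (gaussianPDFReal 0 v x))
      = fun x => ((gaussianPDFReal 0 v x).toNNReal : ℝ≥0∞) := rfl
  rw [heq, integral_withDensity_eq_integral_smul hmeas]
  have h2 : ∫ x, ((gaussianPDFReal 0 v x).toNNReal) • Real.exp (c * x ^ 2)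
      = ∫ x, (Real.sqrt (2 * π * v))⁻¹ * Real.exp (-((1 - 2 * c * v) / (2 * v)) * x ^ 2) := by
    congr 1
    funext x
    rw [NNReal.smul_def, smul_eq_mul, Real.coe_toNNReal _ (gaussianPDFReal_nonneg 0 v x)]
    exact gauss_density_integrand v hv c x
  rw [h2, integral_const_mul, integral_gaussian]
  have h1 : (0:ℝ) < 1 - 2 * c * v := by linarith
  have h3 : π / ((1 - 2 * c * ↑v) / (2 * ↑v)) = (2 * π * v) / (1 - 2 * c * v) := by
    field_simp
  rw [h3, Real.sqrt_div (by positivity)]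
  have h4 : Real.sqrt (2 * π * v) ≠ 0 := by positivity
  field_simp

end Aux

/-- Key inequality in the proof of Theorem 2 of the paper.  For a measurable loss
`L` with values in `[0, 1]`, i.i.d. Gaussian perturbation `ε ~ N(0, σ²I)`, an
invertible operator `T` with `‖T⁻¹x‖₂ ≤ ‖x‖₂/η`, `n ≥ 1` and
`ρ = √k σ (1 + √(log n / k)) / η`, the expected perturbed loss is bounded by
`(1 − 1/√n) · sup_{‖T⁻¹ε'‖₂ ≤ ρ} L(w + ε') + 1/√n`, and in particular by
`sup_{‖T⁻¹ε'‖₂ ≤ ρ} L(w + ε') + 1/√n`. -/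
theorem expected_loss_le_adaptive_sup {k : ℕ} (hk : 0 < k)
    (L : (Fin k → ℝ) → ℝ) (hLmeas : Measurable L)
    (hL0 : ∀ x, 0 ≤ L x) (hL1 : ∀ x, L x ≤ 1)
    (w : Fin k → ℝ) (σ : ℝ≥0) (hσ : 0 < σ)
    (η : ℝ) (hη : 0 < η)
    (T : (Fin k → ℝ) ≃ₗ[ℝ] (Fin k → ℝ))
    (hT : ∀ x : Fin k → ℝ,
      Real.sqrt (∑ i, (T.symm x i) ^ 2) ≤ Real.sqrt (∑ i, (x i) ^ 2) / η)
    (n : ℝ) (hn : 1 ≤ n) (ρ : ℝ)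
    (hρ : ρ = Real.sqrt k * σ * (1 + Real.sqrt (Real.log n / k)) / η) :
    (∫ ε, L (w + ε) ∂(Measure.pi fun _ : Fin k => gaussianReal 0 (σ ^ 2))) ≤
      (1 - 1 / Real.sqrt n) *
          sSup ((fun ε' => L (w + ε')) ''
            {ε' | Real.sqrt (∑ i, (T.symm ε' i) ^ 2) ≤ ρ}) +
        1 / Real.sqrt n ∧
    (∫ ε, L (w + ε) ∂(Measure.pi fun _ : Fin k => gaussianReal 0 (σ ^ 2))) ≤
      sSup ((fun ε' => L (w + ε')) ''
          {ε' | Real.sqrt (∑ i, (T.symm ε' i) ^ 2) ≤ ρ}) +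
        1 / Real.sqrt n := by
  set μpi := (Measure.pi fun _ : Fin k => gaussianReal 0 (σ ^ 2)) with hμpi
  have hn0 : (0:ℝ) < n := lt_of_lt_of_le one_pos hn
  have hLn : 0 ≤ Real.log n := Real.log_nonneg hn
  have hk' : (0:ℝ) < (k:ℝ) := by exact_mod_cast hk
  have hσ0 : (0:ℝ) < (σ:ℝ) := hσ
  set c₀ : ℝ := Real.sqrt k * σ * (1 + Real.sqrt (Real.log n / k)) with hc₀
  have hc₀0 : 0 ≤ c₀ := by positivity
  have hρ' : ρ = c₀ / η := hρ
  have hρ0 : 0 ≤ ρ := by rw [hρ']; positivity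
  set B : Set (Fin k → ℝ) := {ε' | Real.sqrt (∑ i, (T.symm ε' i) ^ 2) ≤ ρ} with hB
  set S : ℝ := sSup ((fun ε' => L (w + ε')) '' B) with hS
  have hBdd : BddAbove ((fun ε' => L (w + ε')) '' B) :=
    ⟨1, by rintro _ ⟨x, -, rfl⟩; exact hL1 _⟩
  have h0B : (0 : Fin k → ℝ) ∈ B := by
    simp only [hB, Set.mem_setOf_eq, map_zero]
    simpa using hρ0
  have hne : ((fun ε' => L (w + ε')) '' B).Nonempty := ⟨_, ⟨0, h0B, rfl⟩⟩
  have hS0 : 0 ≤ S := le_trans (hL0 _) (le_csSup hBdd ⟨0, h0B, rfl⟩)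
  have hS1 : S ≤ 1 := csSup_le hne (by rintro _ ⟨x, -, rfl⟩; exact hL1 _)
  set A : Set (Fin k → ℝ) := {ε | ∑ i, (ε i) ^ 2 ≤ c₀ ^ 2} with hA
  have hAmeas : MeasurableSet A := by
    apply measurableSet_le _ measurable_const
    exact Finset.measurable_sum _ fun i _ => (measurable_pi_apply i).pow_const 2
  have hmemA : ∀ ε ∈ A, L (w + ε) ≤ S := by
    intro ε hε
    refine le_csSup hBdd ⟨ε, ?_, rfl⟩
    have h1 : Real.sqrt (∑ i, (ε i) ^ 2) ≤ c₀ := by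
      rw [← Real.sqrt_sq hc₀0]
      exact Real.sqrt_le_sqrt hε
    calc Real.sqrt (∑ i, (T.symm ε i) ^ 2) ≤ Real.sqrt (∑ i, (ε i) ^ 2) / η := hT ε
      _ ≤ c₀ / η := by gcongr
      _ = ρ := hρ'.symm
  have hL'meas : Measurable fun ε : Fin k → ℝ => L (w + ε) :=
    hLmeas.comp (measurable_const.add measurable_id)
  have hL'int : Integrable (fun ε => L (w + ε)) μpi := by
    refine Integrable.mono' (integrable_const 1) hL'meas.aestronglyMeasurable
      (Filter.Eventually.of_forall fun ε => ?_)
    rw [Real.norm_eq_abs, abs_le]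
    exact ⟨by linarith [hL0 (w + ε)], hL1 _⟩
  have hsplit : ∫ ε, L (w + ε) ∂μpi
      = (∫ ε in A, L (w + ε) ∂μpi) + ∫ ε in Aᶜ, L (w + ε) ∂μpi :=
    (integral_add_compl hAmeas hL'int).symm
  set p : ℝ := (μpi Aᶜ).toReal with hp
  have hsum1 : (μpi A).toReal + p = 1 := by
    rw [hp, ← ENNReal.toReal_add (measure_ne_top _ _) (measure_ne_top _ _),
      measure_add_measure_compl hAmeas, measure_univ, ENNReal.toReal_one]
  have hp0 : 0 ≤ p := ENNReal.toReal_nonneg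
  have hmA0 : 0 ≤ (μpi A).toReal := ENNReal.toReal_nonneg
  have hp1 : p ≤ 1 := by linarith
  have hIA : ∫ ε in A, L (w + ε) ∂μpi ≤ (μpi A).toReal * S := by
    calc ∫ ε in A, L (w + ε) ∂μpi ≤ ∫ _ε in A, S ∂μpi := by
          apply setIntegral_mono_on hL'int.integrableOn
            (integrableOn_const (measure_ne_top _ _)) hAmeas hmemA
      _ = (μpi A).toReal * S := by rw [setIntegral_const, smul_eq_mul, measureReal_def]
  have hIAc : ∫ ε in Aᶜ, L (w + ε) ∂μpi ≤ p := by
    calc ∫ ε in Aᶜ, L (w + ε) ∂μpi ≤ ∫ _ε in Aᶜ, 1 ∂μpi := by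
          apply setIntegral_mono_on hL'int.integrableOn
            (integrableOn_const (measure_ne_top _ _)) hAmeas.compl
            (fun ε _ => hL1 _)
      _ = p := by rw [setIntegral_const, smul_eq_mul, mul_one, measureReal_def]
  -- √n = exp (log n / 2)
  have hsn : Real.sqrt n = Real.exp (Real.log n / 2) := by
    rw [← Real.exp_log (Real.sqrt_pos.mpr hn0), Real.log_sqrt hn0.le]
  -- concentration step
  have hkey : p ≤ 1 / Real.sqrt n := by
    rcases eq_or_lt_of_le hLn with h0 | hLgpos
    · rw [hsn, ← h0]
      simpa using hp1
    · -- notation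
      set a : ℝ := Real.sqrt k with ha'
      set b : ℝ := Real.sqrt (Real.log n) with hb'
      have ha : 0 < a := Real.sqrt_pos.mpr hk'
      have hb : 0 < b := Real.sqrt_pos.mpr hLgpos
      have ha2 : a ^ 2 = (k:ℝ) := Real.sq_sqrt hk'.le
      have hb2 : b ^ 2 = Real.log n := Real.sq_sqrt hLgpos.le
      set t : ℝ := b / (2 * (a + b)) with ht'
      have hab : 0 < a + b := by linarith
      have ht0 : 0 < t := by positivity
      have h2t : 2 * t = b / (a + b) := by
        rw [ht', eq_div_iff hab.ne']
        field_simp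
      have ht2 : 2 * t < 1 := by
        rw [h2t, div_lt_iff₀ hab]
        linarith
      have hy : 1 - 2 * t = a / (a + b) := by
        rw [ht']
        field_simp
        ring
      have hy0 : (0:ℝ) < 1 - 2 * t := by rw [hy]; positivity
      set lam : ℝ := t / (σ:ℝ) ^ 2 with hlam'
      have hlam0 : 0 < lam := by positivity
      have hvne : (σ ^ 2 : ℝ≥0) ≠ 0 := pow_ne_zero 2 hσ.ne'
      have hcoe : ((σ ^ 2 : ℝ≥0) : ℝ) = (σ:ℝ) ^ 2 := by push_cast; ring
      have hcv : 2 * lam * ((σ ^ 2 : ℝ≥0) : ℝ) = 2 * t := by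
        rw [hcoe, hlam']
        field_simp
      have hcv1 : 2 * lam * ((σ ^ 2 : ℝ≥0) : ℝ) < 1 := by rw [hcv]; exact ht2
      set g : (Fin k → ℝ) → ℝ := fun ε => Real.exp (lam * ∑ i, (ε i) ^ 2) with hg
      have hgprod : g = fun ε => ∏ i, Real.exp (lam * (ε i) ^ 2) := by
        funext ε
        simp only [hg, Finset.mul_sum, Real.exp_sum]
      have hgInt : Integrable g μpi := by
        rw [hgprod]
        exact pi_integrable_prod _ (gauss_mgf_integrable (σ ^ 2) hvne lam hcv1)
      have hgE : ∫ ε, g ε ∂μpi = (1 / Real.sqrt (1 - 2 * t)) ^ k := by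
        have h1 := pi_integral_pow (k := k) (gaussianReal 0 (σ ^ 2))
          (fun x => Real.exp (lam * x ^ 2))
        rw [gauss_mgf (σ ^ 2) hvne lam hcv1, hcv] at h1
        rw [hμpi, hgprod]
        exact h1
      have hmar := mul_meas_ge_le_integral_of_nonneg
        (μ := μpi) (f := g)
        (Filter.Eventually.of_forall fun ε => Real.exp_nonneg _) hgInt
        (Real.exp (lam * c₀ ^ 2))
      rw [hgE] at hmar
      have hsub : Aᶜ ⊆ {ε | Real.exp (lam * c₀ ^ 2) ≤ g ε} := by
        intro ε hε
        simp only [Set.mem_compl_iff, hA, Set.mem_setOf_eq, not_le] at hε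
        exact Real.exp_le_exp.mpr (mul_le_mul_of_nonneg_left hε.le hlam0.le)
      have hμsub : p ≤ (μpi {ε | Real.exp (lam * c₀ ^ 2) ≤ g ε}).toReal :=
        ENNReal.toReal_mono (measure_ne_top _ _) (measure_mono hsub)
      have hexpθpos : (0:ℝ) < Real.exp (lam * c₀ ^ 2) := Real.exp_pos _
      have hpd : p ≤ (1 / Real.sqrt (1 - 2 * t)) ^ k / Real.exp (lam * c₀ ^ 2) := by
        rw [le_div_iff₀ hexpθpos]
        calc p * Real.exp (lam * c₀ ^ 2)
            ≤ (μpi {ε | Real.exp (lam * c₀ ^ 2) ≤ g ε}).toReal * Real.exp (lam * c₀ ^ 2) := by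
              exact mul_le_mul_of_nonneg_right hμsub hexpθpos.le
          _ ≤ (1 / Real.sqrt (1 - 2 * t)) ^ k := by rw [mul_comm]; exact hmar
      refine hpd.trans ?_
      -- rewrite everything as exponentials
      have hsqy : Real.sqrt (1 - 2 * t) = Real.exp (Real.log (1 - 2 * t) / 2) := by
        rw [← Real.exp_log (Real.sqrt_pos.mpr hy0), Real.log_sqrt hy0.le]
      have hpow : (1 / Real.sqrt (1 - 2 * t)) ^ k
          = Real.exp ((k:ℝ) * (-(Real.log (1 - 2 * t) / 2))) := by
        rw [hsqy, one_div, ← Real.exp_neg, ← Real.exp_nat_mul]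
      rw [hpow, hsn, ← Real.exp_sub, one_div, ← Real.exp_neg, Real.exp_le_exp]
      -- arithmetic: k * (-(log y / 2)) - lam * c₀² ≤ -(log n / 2)
      have hθ : lam * c₀ ^ 2 = b * (a + b) / 2 := by
        have hsq : Real.sqrt (Real.log n / k) = b / a := by
          rw [Real.sqrt_div hLgpos.le, ← ha', ← hb']
        rw [hc₀, hsq, hlam', ht']
        field_simp
      have hlog : -Real.log (1 - 2 * t) ≤ b / a := by
        have h5 := Real.log_le_sub_one_of_pos (inv_pos.mpr hy0)
        rw [Real.log_inv] at h5
        have h6 : (1 - 2 * t)⁻¹ - 1 = b / a := by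
          rw [hy]
          field_simp
          ring
        linarith [h6 ▸ h5]
      have h7 : (k:ℝ) * (-(Real.log (1 - 2 * t) / 2)) ≤ a * b / 2 := by
        have h8 := mul_le_mul_of_nonneg_left hlog (by positivity : (0:ℝ) ≤ a ^ 2 / 2)
        have h9 : a ^ 2 / 2 * (b / a) = a * b / 2 := by
          field_simp
        rw [h9] at h8
        rw [← ha2]
        have h10 : a ^ 2 * (-(Real.log (1 - 2 * t) / 2))
            = a ^ 2 / 2 * (-Real.log (1 - 2 * t)) := by ring
        rw [h10]
        exact h8
      have hbl : b * (a + b) / 2 = a * b / 2 + Real.log n / 2 := by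
        linear_combination hb2 / 2
      rw [hθ]
      linarith
  -- combine
  have hmain : ∫ ε, L (w + ε) ∂μpi ≤ (1 - 1 / Real.sqrt n) * S + 1 / Real.sqrt n := by
    have hmAS : (μpi A).toReal * S ≤ (1 - p) * S := by
      have : (μpi A).toReal = 1 - p := by linarith
      rw [this]
    have hb1 : ∫ ε, L (w + ε) ∂μpi ≤ (1 - p) * S + p := by
      rw [hsplit]
      exact add_le_add (hIA.trans hmAS) hIAc
    have hmul := mul_le_mul_of_nonneg_right hkey (by linarith : (0:ℝ) ≤ 1 - S)
    calc ∫ ε, L (w + ε) ∂μpi ≤ (1 - p) * S + p := hb1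
      _ = S + p * (1 - S) := by ring
      _ ≤ S + 1 / Real.sqrt n * (1 - S) := by linarith
      _ = (1 - 1 / Real.sqrt n) * S + 1 / Real.sqrt n := by ring
  refine ⟨hmain, hmain.trans ?_⟩
  have hsn0 : 0 ≤ 1 / Real.sqrt n := by positivity
  have hprod : 0 ≤ 1 / Real.sqrt n * S := mul_nonneg hsn0 hS0
  have hre : (1 - 1 / Real.sqrt n) * S + 1 / Real.sqrt n
      = S + 1 / Real.sqrt n - 1 / Real.sqrt n * S := by ring
  rw [hre]
  linarith
end
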